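/- Let D be a real random variable whose law has a density f with respect to Lebesgue measure satisfying f(w) ≤ C for almost every w, where C ≥ 0. Then for every real δ, E[ R̃(D, δ)² ] ≤ C |δ|³, where R̃(d, δ) = ∫_0^δ [ 𝟙(d ≤ t) − 𝟙(d ≤ 0) ] dt. -/

import Mathlib

open MeasureTheory

/-- The remainder term `R̃(d, δ) = ∫_0^δ [𝟙(d ≤ t) − 𝟙(d ≤ 0)] dt` in the quadratic
expansion of the quantile check function. -/
noncomputable def quantileRemainder (d δ : ℝ) : ℝ :=
  ∫ t in (0:ℝ)..δ, ((if d ≤ t then (1:ℝ) else 0) - (if d ≤ 0 then (1:ℝ) else 0))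

/-- If the real random variable `D` has a Lebesgue density `f`
bounded (a.e.) by `C ≥ 0`, then for every real `δ`,
`E[R̃(D, δ)²] ≤ C |δ|³`. -/
theorem expected_quantileRemainder_sq_le
    {Ω : Type*} [MeasurableSpace Ω] (μ : Measure Ω) [IsProbabilityMeasure μ]
    (D : Ω → ℝ) (hD : Measurable D)
    (f : ℝ → ℝ) (C : ℝ) (hC : 0 ≤ C)
    (hf0 : ∀ᵐ w ∂(volume : Measure ℝ), 0 ≤ f w)
    (hdens : Measure.map D μ = volume.withDensity (fun w => ENNReal.ofReal (f w)))
    (hfC : ∀ᵐ w ∂(volume : Measure ℝ), f w ≤ C) :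
    ∀ δ : ℝ, (∫ ω, (quantileRemainder (D ω) δ) ^ 2 ∂μ) ≤ C * |δ| ^ 3 := by
  intro δ
  set S : Set ℝ := Set.Ioc (min δ 0) (max δ 0) with hS
  have hSmeas : MeasurableSet S := measurableSet_Ioc
  -- pointwise bound
  have hpt : ∀ d : ℝ, (quantileRemainder d δ) ^ 2 ≤ δ ^ 2 * S.indicator (fun _ => (1:ℝ)) d := by
    intro d
    by_cases hd : d ∈ S
    · rw [Set.indicator_of_mem hd, mul_one]
      have habs : |quantileRemainder d δ| ≤ |δ| := by
        have h := intervalIntegral.norm_integral_le_of_norm_le_const (C := 1)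
          (f := fun t => ((if d ≤ t then (1:ℝ) else 0) - (if d ≤ 0 then (1:ℝ) else 0)))
          (a := 0) (b := δ) (by
            intro t _
            rw [Real.norm_eq_abs]
            by_cases h1 : d ≤ t <;> by_cases h2 : d ≤ 0 <;> simp [h1, h2])
        simpa [quantileRemainder, Real.norm_eq_abs] using h
      calc (quantileRemainder d δ) ^ 2 = |quantileRemainder d δ| ^ 2 := (sq_abs _).symm
        _ ≤ |δ| ^ 2 := pow_le_pow_left₀ (abs_nonneg _) habs 2
        _ = δ ^ 2 := sq_abs δ
    · have hz : quantileRemainder d δ = 0 := by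
        rw [quantileRemainder]
        rw [intervalIntegral.integral_congr (g := fun _ => (0:ℝ)) ?_]
        · simp
        · intro t ht
          rw [Set.mem_Ioc] at hd
          push_neg at hd
          rcases Set.mem_uIcc.mp ht with ⟨h1, h2⟩ | ⟨h1, h2⟩
          · rcases le_or_gt d (min δ 0) with h | h
            · have hd0 : d ≤ 0 := h.trans (min_le_right _ _)
              have hdt : d ≤ t := hd0.trans h1
              simp [hdt, hd0]
            · have h' := hd h
              have hd0 : ¬ d ≤ 0 := by
                have : (0:ℝ) ≤ max δ 0 := le_max_right _ _
                linarith
              have hdt : ¬ d ≤ t := by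
                have : t ≤ max δ 0 := h2.trans (le_max_left _ _)
                linarith
              simp [hdt, hd0]
          · rcases le_or_gt d (min δ 0) with h | h
            · have hd0 : d ≤ 0 := h.trans (min_le_right _ _)
              have hdt : d ≤ t := le_trans (h.trans (min_le_left _ _)) h1
              simp [hdt, hd0]
            · have h' := hd h
              have hd0 : ¬ d ≤ 0 := by
                have : (0:ℝ) ≤ max δ 0 := le_max_right _ _
                linarith
              have hdt : ¬ d ≤ t := by
                have : t ≤ max δ 0 := h2.trans (le_max_right _ _)
                linarith
              simp [hdt, hd0]
      rw [hz, Set.indicator_of_notMem hd]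
      simp
  -- rewrite indicator composition as preimage indicator
  have hcomp : ∀ ω, S.indicator (fun _ => (1:ℝ)) (D ω)
      = (D ⁻¹' S).indicator (fun _ => (1:ℝ)) ω := by
    intro ω
    by_cases h : D ω ∈ S
    · rw [Set.indicator_of_mem h]; exact (Set.indicator_of_mem (show ω ∈ D ⁻¹' S from h) (fun _ => (1:ℝ))).symm
    · rw [Set.indicator_of_notMem h]; exact (Set.indicator_of_notMem (show ω ∉ D ⁻¹' S from h) (fun _ => (1:ℝ))).symm
  have hpreS : MeasurableSet (D ⁻¹' S) := hD hSmeas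
  have hint : Integrable (fun ω => δ ^ 2 * (D ⁻¹' S).indicator (fun _ => (1:ℝ)) ω) μ :=
    ((integrable_const (1:ℝ)).indicator hpreS).const_mul _
  have key : (∫ ω, (quantileRemainder (D ω) δ) ^ 2 ∂μ)
      ≤ ∫ ω, δ ^ 2 * (D ⁻¹' S).indicator (fun _ => (1:ℝ)) ω ∂μ := by
    refine integral_mono_of_nonneg (Filter.Eventually.of_forall fun ω => sq_nonneg _) hint
      (Filter.Eventually.of_forall fun ω => ?_)
    have := hpt (D ω)
    rwa [hcomp ω] at this
  have hval : (∫ ω, δ ^ 2 * (D ⁻¹' S).indicator (fun _ => (1:ℝ)) ω ∂μ)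
      = δ ^ 2 * (μ (D ⁻¹' S)).toReal := by
    rw [integral_const_mul, integral_indicator_const (1:ℝ) hpreS, smul_eq_mul, mul_one, measureReal_def]
  -- bound the probability
  have hmeasure : (μ (D ⁻¹' S)).toReal ≤ C * |δ| := by
    have hmap : μ (D ⁻¹' S) = Measure.map D μ S := (Measure.map_apply hD hSmeas).symm
    have hle : μ (D ⁻¹' S) ≤ ENNReal.ofReal (C * |δ|) := by
      rw [hmap, hdens, withDensity_apply _ hSmeas]
      have h1 : (∫⁻ w in S, ENNReal.ofReal (f w) ∂volume)
          ≤ ∫⁻ _ in S, ENNReal.ofReal C ∂volume := by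
        refine lintegral_mono_ae ?_
        exact (ae_restrict_of_ae (hfC.mono fun w hw => ENNReal.ofReal_le_ofReal hw))
      have h2 : (∫⁻ _ in S, ENNReal.ofReal C ∂volume) = ENNReal.ofReal C * volume S := by
        rw [setLIntegral_const]
      have h3 : volume S = ENNReal.ofReal |δ| := by
        rw [hS, Real.volume_Ioc]
        congr 1
        rw [max_sub_min_eq_abs]
        simp [abs_sub_comm]
      calc (∫⁻ w in S, ENNReal.ofReal (f w) ∂volume)
          ≤ ENNReal.ofReal C * volume S := h1.trans (le_of_eq h2)
        _ = ENNReal.ofReal (C * |δ|) := by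
            rw [h3, ← ENNReal.ofReal_mul hC]
    exact ENNReal.toReal_le_of_le_ofReal (mul_nonneg hC (abs_nonneg δ)) hle
  calc (∫ ω, (quantileRemainder (D ω) δ) ^ 2 ∂μ)
      ≤ δ ^ 2 * (μ (D ⁻¹' S)).toReal := key.trans (le_of_eq hval)
    _ ≤ δ ^ 2 * (C * |δ|) := mul_le_mul_of_nonneg_left hmeasure (sq_nonneg δ)
    _ = C * |δ| ^ 3 := by rw [← sq_abs δ]; ring
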